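/- Let ℓ be a prime, r ≥ 1, and Π a closed subgroup of GL_r(ℤ_ℓ). There exists an integer N ≥ 1, depending only on Π, such that for every n ≥ N the set 𝒞_n(Π) coincides with the set of open subgroups U ⊆ Π such that Π(n) ⊆ U but Π(n-1) ⊄ U. -/

import Mathlib

set_option synthInstance.maxHeartbeats 1000000
set_option maxHeartbeats 2000000


open Matrix

/-- Reduction modulo `ℓ ^ n` on `GL_r(ℤ_ℓ)`. -/
noncomputable def glRed (l : ℕ) [Fact (Nat.Prime l)] (r n : ℕ) :
    GL (Fin r) ℤ_[l] →* GL (Fin r) (ZMod (l ^ n)) :=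
  Matrix.GeneralLinearGroup.map (PadicInt.toZModPow n)

/-- `Π(n)`: the kernel of reduction modulo `ℓ ^ n` restricted to the closed subgroup `Π`,
viewed as a subgroup of `Π`. -/
noncomputable def levelSubgroup (l : ℕ) [Fact (Nat.Prime l)] (r : ℕ)
    (P : Subgroup (GL (Fin r) ℤ_[l])) (n : ℕ) : Subgroup ↥P :=
  ((glRed l r n).comp P.subtype).ker

/-- A maximal proper open subgroup of a topological group. -/
def IsMaximalOpenSubgroup {G : Type*} [Group G] [TopologicalSpace G] (U : Subgroup G) : Prop :=
  IsOpen (U : Set G) ∧ U ≠ ⊤ ∧ ∀ V : Subgroup G, IsOpen (V : Set G) → U < V → V = ⊤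

/-- The Frattini subgroup of a topological group: the intersection of all maximal proper
open subgroups. -/
def frattiniOpen (G : Type*) [Group G] [TopologicalSpace G] : Subgroup G :=
  sInf {U : Subgroup G | IsMaximalOpenSubgroup U}

/-- The Frattini subgroup of a subgroup `K`, viewed as a subgroup of the ambient group. -/
def frattiniOf {G : Type*} [Group G] [TopologicalSpace G] (K : Subgroup G) : Subgroup G :=
  (frattiniOpen ↥K).map K.subtype

/-- `𝒞_n(Π)`: the set of open subgroups `U ⊆ Π` with `Φ(Π(n-1)) ⊆ U` but `Π(n-1) ⊄ U`. -/
noncomputable def Cn (l : ℕ) [Fact (Nat.Prime l)] (r : ℕ)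
    (P : Subgroup (GL (Fin r) ℤ_[l])) (n : ℕ) : Set (Subgroup ↥P) :=
  {U | IsOpen (U : Set ↥P) ∧ frattiniOf (levelSubgroup l r P (n - 1)) ≤ U ∧
    ¬ levelSubgroup l r P (n - 1) ≤ U}

namespace CnAux

open Finset


/-- All entries of `X` are divisible by `l^n`. -/
def Near (l : ℕ) [Fact (Nat.Prime l)] (n : ℕ) {r : ℕ}
    (X : Matrix (Fin r) (Fin r) ℤ_[l]) : Prop :=
  ∀ i j, ((l : ℤ_[l]) ^ n) ∣ X i j

variable {l : ℕ} [Fact (Nat.Prime l)] {r : ℕ}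

theorem near_mono {m n : ℕ} (h : m ≤ n) {X : Matrix (Fin r) (Fin r) ℤ_[l]}
    (hX : Near l n X) : Near l m X :=
  fun i j => dvd_trans (pow_dvd_pow _ h) (hX i j)

theorem near_add {n : ℕ} {X Y : Matrix (Fin r) (Fin r) ℤ_[l]}
    (hX : Near l n X) (hY : Near l n Y) : Near l n (X + Y) := fun i j => by
  simpa [Matrix.add_apply] using dvd_add (hX i j) (hY i j)

theorem near_neg {n : ℕ} {X : Matrix (Fin r) (Fin r) ℤ_[l]}
    (hX : Near l n X) : Near l n (-X) := fun i j => by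
  simpa [Matrix.neg_apply] using (hX i j).neg_right

theorem near_sub {n : ℕ} {X Y : Matrix (Fin r) (Fin r) ℤ_[l]}
    (hX : Near l n X) (hY : Near l n Y) : Near l n (X - Y) := by
  rw [sub_eq_add_neg]; exact near_add hX (near_neg hY)

theorem near_zero (n : ℕ) : Near l n (0 : Matrix (Fin r) (Fin r) ℤ_[l]) := fun i j => by
  simp [Near, Matrix.zero_apply]

theorem near_mul {m n : ℕ} {X Y : Matrix (Fin r) (Fin r) ℤ_[l]}
    (hX : Near l m X) (hY : Near l n Y) : Near l (m + n) (X * Y) := fun i j => by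
  rw [Matrix.mul_apply, pow_add]
  exact Finset.dvd_sum fun k _ => mul_dvd_mul (hX i k) (hY k j)

theorem near_mul_left {n : ℕ} {X Y : Matrix (Fin r) (Fin r) ℤ_[l]}
    (hY : Near l n Y) : Near l n (X * Y) := fun i j => by
  rw [Matrix.mul_apply]
  exact Finset.dvd_sum fun k _ => Dvd.dvd.mul_left (hY k j) _

theorem near_mul_right {n : ℕ} {X Y : Matrix (Fin r) (Fin r) ℤ_[l]}
    (hX : Near l n X) : Near l n (X * Y) := fun i j => by
  rw [Matrix.mul_apply]
  exact Finset.dvd_sum fun k _ => Dvd.dvd.mul_right (hX i k) _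

theorem near_nsmul {n : ℕ} (c : ℕ) {X : Matrix (Fin r) (Fin r) ℤ_[l]}
    (hX : Near l n X) : Near l n (c • X) := fun i j => by
  rw [Matrix.smul_apply, nsmul_eq_mul]
  exact Dvd.dvd.mul_left (hX i j) _

theorem near_l_nsmul {n : ℕ} {X : Matrix (Fin r) (Fin r) ℤ_[l]}
    (hX : Near l n X) : Near l (n + 1) (l • X) := fun i j => by
  rw [Matrix.smul_apply, nsmul_eq_mul, pow_succ, mul_comm ((l:ℤ_[l])^n)]
  exact mul_dvd_mul_left _ (hX i j)

theorem near_pow {n : ℕ} {X : Matrix (Fin r) (Fin r) ℤ_[l]}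
    (hX : Near l n X) : ∀ k, Near l (n * k) (X ^ k)
  | 0 => by
      rw [Nat.mul_zero, pow_zero]
      intro i j; exact one_dvd _
  | k + 1 => by
      rw [pow_succ, Nat.mul_succ]
      exact near_mul (near_pow hX k) hX

theorem near_one_mul {n : ℕ} {A B : Matrix (Fin r) (Fin r) ℤ_[l]}
    (hA : Near l n (A - 1)) (hB : Near l n (B - 1)) : Near l n (A * B - 1) := by
  have h : A * B - 1 = (A - 1) * (B - 1) + (A - 1) + (B - 1) := by noncomm_ring
  rw [h]
  exact near_add (near_add (near_mul_right hA) hA) hB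

theorem near_inv {n : ℕ} {A A' : Matrix (Fin r) (Fin r) ℤ_[l]}
    (h : A' * A = 1) (hA : Near l n (A - 1)) : Near l n (A' - 1) := by
  have h2 : A' - 1 = A' * -(A - 1) := by
    rw [mul_neg, mul_sub, h, mul_one, neg_sub]
  rw [h2]
  exact near_mul_left (near_neg hA)

theorem hl2 : 2 ≤ l := (Fact.out : Nat.Prime l).two_le

theorem l_cast_ne_zero : (l : ℤ_[l]) ≠ 0 :=
  Nat.cast_ne_zero.mpr (Fact.out : Nat.Prime l).ne_zero

/-- Binomial estimate: `A^l - 1 - l•(A-1)` is divisible by `l^(2n)`. -/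
theorem near_pow_prime {n : ℕ} {A : Matrix (Fin r) (Fin r) ℤ_[l]}
    (hA : Near l n (A - 1)) : Near l (2 * n) (A ^ l - 1 - l • (A - 1)) := by
  set X := A - 1 with hX
  have hA1 : A = X + 1 := by rw [hX, sub_add_cancel]
  have hcomm : Commute X (1 : Matrix (Fin r) (Fin r) ℤ_[l]) := Commute.one_right X
  have hbin : A ^ l = ∑ m ∈ range (l + 1),
      X ^ m * ((l.choose m : ℕ) : Matrix (Fin r) (Fin r) ℤ_[l]) := by
    rw [hA1, hcomm.add_pow]
    exact Finset.sum_congr rfl fun m _ => by rw [one_pow, mul_one]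
  have hsplit : range (l + 1) = insert 0 (insert 1 (Finset.Ico 2 (l + 1))) := by
    ext x
    simp only [Finset.mem_range, Finset.mem_insert, Finset.mem_Ico]
    have := hl2 (l := l)
    omega
  have h0 : (0 : ℕ) ∉ insert 1 (Finset.Ico 2 (l + 1)) := by simp
  have h1 : (1 : ℕ) ∉ Finset.Ico 2 (l + 1) := by simp
  rw [hbin, hsplit, Finset.sum_insert h0, Finset.sum_insert h1]
  have e0 : X ^ 0 * ((l.choose 0 : ℕ) : Matrix (Fin r) (Fin r) ℤ_[l]) = 1 := by simp
  have e1 : X ^ 1 * ((l.choose 1 : ℕ) : Matrix (Fin r) (Fin r) ℤ_[l]) = l • X := by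
    rw [pow_one, Nat.choose_one_right, ← (Nat.cast_commute (l : ℕ) X).eq, ← nsmul_eq_mul]
  rw [e0, e1]
  have h3 : (1 : Matrix (Fin r) (Fin r) ℤ_[l]) + (l • X + ∑ x ∈ Finset.Ico 2 (l + 1),
      X ^ x * ((l.choose x : ℕ) : Matrix (Fin r) (Fin r) ℤ_[l])) - 1 - l • X
      = ∑ x ∈ Finset.Ico 2 (l + 1),
        X ^ x * ((l.choose x : ℕ) : Matrix (Fin r) (Fin r) ℤ_[l]) := by
    abel
  rw [h3]
  intro i j
  rw [Matrix.sum_apply]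
  refine Finset.dvd_sum fun k hk => ?_
  have hk2 : 2 ≤ k := (Finset.mem_Ico.mp hk).1
  have hnear : Near l (2 * n) (X ^ k) := by
    refine near_mono ?_ (near_pow hA k)
    calc 2 * n ≤ k * n := Nat.mul_le_mul_right n hk2
    _ = n * k := Nat.mul_comm _ _
  have := near_mul_right (Y := ((l.choose k : ℕ) : Matrix (Fin r) (Fin r) ℤ_[l])) hnear
  exact this i j

/-- Exact division of a matrix with all entries divisible by `l^m`. -/
theorem near_exists_div {m : ℕ} {X : Matrix (Fin r) (Fin r) ℤ_[l]}
    (h : Near l m X) : ∃ Y, X = ((l : ℤ_[l]) ^ m) • Y := by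
  refine ⟨Matrix.of fun i j => (h i j).choose, ?_⟩
  ext i j
  rw [Matrix.smul_apply, Matrix.of_apply, smul_eq_mul]
  exact (h i j).choose_spec

theorem near_of_smul {m k : ℕ} {Y : Matrix (Fin r) (Fin r) ℤ_[l]}
    (h : Near l (m + k) (((l : ℤ_[l]) ^ m) • Y)) : Near l k Y := fun i j => by
  have := h i j
  rw [Matrix.smul_apply, smul_eq_mul, pow_add] at this
  exact (mul_dvd_mul_iff_left (pow_ne_zero m (l_cast_ne_zero (l := l)))).mp this


section Level

variable {l : ℕ} [Fact (Nat.Prime l)] {r : ℕ} {P : Subgroup (GL (Fin r) ℤ_[l])}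

/-- The underlying matrix of an element of `P`. -/
def umat (x : ↥P) : Matrix (Fin r) (Fin r) ℤ_[l] :=
  ((x : GL (Fin r) ℤ_[l]) : Matrix (Fin r) (Fin r) ℤ_[l])

@[simp] theorem umat_one : umat (1 : ↥P) = 1 := rfl

@[simp] theorem umat_mul (x y : ↥P) : umat (x * y) = umat x * umat y := rfl

@[simp] theorem umat_pow (x : ↥P) (k : ℕ) : umat (x ^ k) = (umat x) ^ k := rfl

theorem umat_inv_mul (x : ↥P) : umat x⁻¹ * umat x = 1 := by
  have : ((x⁻¹ : ↥P) : GL (Fin r) ℤ_[l]) = ((x : GL (Fin r) ℤ_[l]))⁻¹ := rfl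
  simp only [umat, this]
  exact Units.inv_mul _

theorem umat_mul_inv (x : ↥P) : umat x * umat x⁻¹ = 1 := by
  have : ((x⁻¹ : ↥P) : GL (Fin r) ℤ_[l]) = ((x : GL (Fin r) ℤ_[l]))⁻¹ := rfl
  simp only [umat, this]
  exact Units.mul_inv _

theorem mem_level_iff {n : ℕ} {x : ↥P} :
    x ∈ levelSubgroup l r P n ↔ Near l n (umat x - 1) := by
  have h1 : x ∈ levelSubgroup l r P n ↔
      (umat x).map (PadicInt.toZModPow n) = 1 := by
    rw [levelSubgroup, MonoidHom.mem_ker, MonoidHom.comp_apply]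
    constructor
    · intro h
      have := congrArg Units.val h
      simpa [glRed, Matrix.GeneralLinearGroup.map, umat] using this
    · intro h
      apply Units.ext
      simpa [glRed, Matrix.GeneralLinearGroup.map, umat] using h
  rw [h1]
  constructor
  · intro h i j
    have h2 : PadicInt.toZModPow n ((umat x - 1) i j) = 0 := by
      have : (umat x - 1) i j = umat x i j - (1 : Matrix (Fin r) (Fin r) ℤ_[l]) i j := by
        simp [Matrix.sub_apply]
      rw [this, map_sub]
      have hx : PadicInt.toZModPow n (umat x i j) = (1 : Matrix (Fin r) (Fin r) (ZMod (l ^ n))) i j := by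
        rw [← h]; simp [Matrix.map_apply]
      rw [hx]
      rcases eq_or_ne i j with rfl | hij
      · simp [Matrix.one_apply]
      · simp [Matrix.one_apply, hij]
    have h3 : (umat x - 1) i j ∈ RingHom.ker (PadicInt.toZModPow (p := l) n) := h2
    rw [PadicInt.ker_toZModPow, Ideal.mem_span_singleton] at h3
    exact h3
  · intro h
    ext i j
    have h3 : (umat x - 1) i j ∈ RingHom.ker (PadicInt.toZModPow (p := l) n) := by
      rw [PadicInt.ker_toZModPow, Ideal.mem_span_singleton]
      exact h i j
    have h2 : PadicInt.toZModPow n ((umat x - 1) i j) = 0 := h3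
    have : (umat x - 1) i j = umat x i j - (1 : Matrix (Fin r) (Fin r) ℤ_[l]) i j := by
      simp [Matrix.sub_apply]
    rw [this, map_sub, sub_eq_zero] at h2
    rw [Matrix.map_apply, h2]
    rcases eq_or_ne i j with rfl | hij
    · simp [Matrix.one_apply]
    · simp [Matrix.one_apply, hij]

theorem level_antitone {m n : ℕ} (h : m ≤ n) :
    levelSubgroup l r P n ≤ levelSubgroup l r P m := fun x hx => by
  rw [mem_level_iff] at hx ⊢
  exact near_mono h hx

theorem pow_mem_level {n : ℕ} (hn : 1 ≤ n) {x : ↥P} (hx : x ∈ levelSubgroup l r P n) :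
    x ^ l ∈ levelSubgroup l r P (n + 1) := by
  rw [mem_level_iff] at hx ⊢
  rw [umat_pow]
  have hd := near_pow_prime hx
  have hsum : umat x ^ l - 1 = (umat x ^ l - 1 - l • (umat x - 1)) + l • (umat x - 1) := by
    abel
  rw [hsum]
  exact near_add (near_mono (by omega) hd) (near_l_nsmul hx)

theorem commutator_mem_level {n m : ℕ} (hm : m ≤ 2 * n) {x y : ↥P}
    (hx : x ∈ levelSubgroup l r P n) (hy : y ∈ levelSubgroup l r P n) :
    x⁻¹ * y⁻¹ * x * y ∈ levelSubgroup l r P m := by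
  rw [mem_level_iff] at hx hy ⊢
  refine near_mono (show m ≤ n + n by omega) ?_
  have h1 : umat x⁻¹ * (umat y⁻¹ * (umat y * umat x)) = 1 := by
    rw [← mul_assoc (umat y⁻¹) (umat y), umat_inv_mul, one_mul, umat_inv_mul]
  have key : umat (x⁻¹ * y⁻¹ * x * y) - 1
      = umat x⁻¹ * (umat y⁻¹ * ((umat x - 1) * (umat y - 1) - (umat y - 1) * (umat x - 1))) := by
    have e : umat (x⁻¹ * y⁻¹ * x * y) = umat x⁻¹ * (umat y⁻¹ * (umat x * umat y)) := by
      simp [mul_assoc]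
    have hd : (umat x - 1) * (umat y - 1) - (umat y - 1) * (umat x - 1)
        = umat x * umat y - umat y * umat x := by noncomm_ring
    rw [e, hd, mul_sub, mul_sub, h1]
  rw [key]
  exact near_mul_left (near_mul_left (near_sub (near_mul hx hy) (near_mul hy hx)))

end Level

section Vset

variable (l : ℕ) [Fact (Nat.Prime l)] (r : ℕ) (P : Subgroup (GL (Fin r) ℤ_[l]))

/-- The set of "leading coefficients mod `l`" of elements of level `n`. -/
def Vset (n : ℕ) : Set (Matrix (Fin r) (Fin r) (ZMod (l ^ 1))) :=
  {α | ∃ x : ↥P, x ∈ levelSubgroup l r P n ∧ ∃ A : Matrix (Fin r) (Fin r) ℤ_[l],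
    umat x = 1 + ((l : ℤ_[l]) ^ n) • A ∧ A.map (PadicInt.toZModPow 1) = α}

variable {l r P}

theorem near_of_umat_eq {n : ℕ} {x : ↥P} {A : Matrix (Fin r) (Fin r) ℤ_[l]}
    (h : umat x = 1 + ((l : ℤ_[l]) ^ n) • A) : Near l n (umat x - 1) := fun i j => by
  rw [h]
  have : (1 : Matrix (Fin r) (Fin r) ℤ_[l]) + ((l : ℤ_[l]) ^ n) • A - 1
      = ((l : ℤ_[l]) ^ n) • A := by abel
  rw [this, Matrix.smul_apply, smul_eq_mul]
  exact Dvd.intro _ rfl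

theorem map_smul_l_zero (C : Matrix (Fin r) (Fin r) ℤ_[l]) :
    ((l • C).map (PadicInt.toZModPow 1)) = 0 := by
  have hl0 : (PadicInt.toZModPow (p := l) 1) (l : ℤ_[l]) = 0 := by
    rw [map_natCast]
    have : ((l : ℕ) : ZMod (l ^ 1)) = ((l ^ 1 : ℕ) : ZMod (l ^ 1)) := by norm_num
    rw [this, ZMod.natCast_self]
  ext i j
  rw [Matrix.map_apply, Matrix.smul_apply, nsmul_eq_mul, _root_.map_mul, hl0, zero_mul,
    Matrix.zero_apply]

theorem near_one_of_map_eq {A B : Matrix (Fin r) (Fin r) ℤ_[l]}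
    (h : A.map (PadicInt.toZModPow 1) = B.map (PadicInt.toZModPow 1)) :
    Near l 1 (A - B) := fun i j => by
  have h2 : (PadicInt.toZModPow (p := l) 1) ((A - B) i j) = 0 := by
    have : (A - B) i j = A i j - B i j := by simp [Matrix.sub_apply]
    rw [this, map_sub, sub_eq_zero]
    have := congrArg (fun M => M i j) h
    simpa [Matrix.map_apply] using this
  have h3 : (A - B) i j ∈ RingHom.ker (PadicInt.toZModPow (p := l) 1) := h2
  rw [PadicInt.ker_toZModPow, Ideal.mem_span_singleton] at h3
  simpa using h3

theorem vset_mono {n : ℕ} (hn : 2 ≤ n) : Vset l r P n ⊆ Vset l r P (n + 1) := by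
  rintro α ⟨x, hx, A, hxA, hmap⟩
  have hnear : Near l n (umat x - 1) := near_of_umat_eq hxA
  have hR : Near l (n + 2) ((umat x) ^ l - 1 - l • (umat x - 1)) :=
    near_mono (by omega) (near_pow_prime hnear)
  obtain ⟨R', hR'⟩ := near_exists_div hR
  refine ⟨x ^ l, pow_mem_level (by omega) hx, A + l • R', ?_, ?_⟩
  · rw [umat_pow]
    have e1 : (umat x) ^ l = ((umat x) ^ l - 1 - l • (umat x - 1)) + 1 + l • (umat x - 1) := by
      abel
    rw [e1, hR', hxA]
    have e2 : (1 : Matrix (Fin r) (Fin r) ℤ_[l]) + ((l : ℤ_[l]) ^ n) • A - 1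
        = ((l : ℤ_[l]) ^ n) • A := by abel
    rw [e2]
    have e3 : l • (((l : ℤ_[l]) ^ n) • A) = ((l : ℤ_[l]) ^ (n + 1)) • A := by
      rw [← Nat.cast_smul_eq_nsmul ℤ_[l] l, smul_smul, ← pow_succ']
    have e4 : ((l : ℤ_[l]) ^ (n + 1)) • (A + l • R')
        = ((l : ℤ_[l]) ^ (n + 1)) • A + ((l : ℤ_[l]) ^ (n + 2)) • R' := by
      rw [smul_add]
      congr 1
      rw [← Nat.cast_smul_eq_nsmul ℤ_[l] l R', smul_smul, ← pow_succ]
    rw [e3, e4]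
    abel
  · rw [Matrix.map_add _ (fun a b => map_add (PadicInt.toZModPow 1) a b), map_smul_l_zero, add_zero, hmap]

theorem exists_stab : ∃ N, 2 ≤ N ∧ ∀ n, N ≤ n → Vset l r P n = Vset l r P N := by
  haveI : NeZero (l ^ 1) := ⟨pow_ne_zero _ (Fact.out : Nat.Prime l).ne_zero⟩
  have hsub : ∀ a b : ℕ, 2 ≤ a → a ≤ b → Vset l r P a ⊆ Vset l r P b := by
    intro a b ha hab
    induction b, hab using Nat.le_induction with
    | base => exact subset_rfl
    | succ b hb ih => exact subset_trans ih (vset_mono (by omega))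
  set g : ℕ → ℕ := fun k => (Vset l r P (k + 2)).ncard with hg
  have hbdd : BddAbove (Set.range g) := by
    refine ⟨Nat.card (Matrix (Fin r) (Fin r) (ZMod (l ^ 1))), ?_⟩
    rintro v ⟨k, rfl⟩
    calc g k ≤ (Set.univ : Set (Matrix (Fin r) (Fin r) (ZMod (l ^ 1)))).ncard :=
        Set.ncard_le_ncard (Set.subset_univ _) (Set.toFinite _)
    _ = _ := Set.ncard_univ _
  have hne : (Set.range g).Nonempty := ⟨g 0, ⟨0, rfl⟩⟩
  obtain ⟨k₀, hk₀⟩ := Nat.sSup_mem hne hbdd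
  refine ⟨k₀ + 2, by omega, fun n hn => ?_⟩
  have h1 : Vset l r P (k₀ + 2) ⊆ Vset l r P n := hsub _ _ (by omega) hn
  have h2 : (Vset l r P n).ncard ≤ (Vset l r P (k₀ + 2)).ncard := by
    have hle : (Vset l r P (n - 2 + 2)).ncard ≤ sSup (Set.range g) := le_csSup hbdd ⟨n - 2, rfl⟩
    have heq : n - 2 + 2 = n := by omega
    rw [heq] at hle
    rw [← hk₀] at hle
    exact hle
  exact (Set.eq_of_subset_of_ncard_le h1 h2 (Set.toFinite _)).symm

theorem root_step {N : ℕ} (hN : 2 ≤ N)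
    (hstab : ∀ n, N ≤ n → Vset l r P n = Vset l r P N)
    {n : ℕ} (hn : N ≤ n) {x : ↥P} (hx : x ∈ levelSubgroup l r P (n + 1)) :
    ∃ y : ↥P, y ∈ levelSubgroup l r P n ∧ (y ^ l)⁻¹ * x ∈ levelSubgroup l r P (n + 2) := by
  have hxnear : Near l (n + 1) (umat x - 1) := mem_level_iff.mp hx
  obtain ⟨A, hA⟩ := near_exists_div hxnear
  have hxA : umat x = 1 + ((l : ℤ_[l]) ^ (n + 1)) • A := by rw [← hA]; abel
  have hαmem : A.map (PadicInt.toZModPow 1) ∈ Vset l r P (n + 1) := ⟨x, hx, A, hxA, rfl⟩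
  rw [hstab (n + 1) (by omega), ← hstab n hn] at hαmem
  obtain ⟨y, hy, B, hyB, hBmap⟩ := hαmem
  refine ⟨y, hy, ?_⟩
  rw [mem_level_iff]
  have hinv : umat (y ^ l)⁻¹ * umat (y ^ l) = 1 := umat_inv_mul _
  have e1 : umat ((y ^ l)⁻¹ * x) - 1 = umat (y ^ l)⁻¹ * (umat x - (umat y) ^ l) := by
    rw [umat_mul, mul_sub]
    have : umat (y ^ l)⁻¹ * (umat y) ^ l = 1 := by rw [← umat_pow]; exact hinv
    rw [this]
  rw [e1]
  refine near_mul_left ?_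
  have hynear : Near l n (umat y - 1) := near_of_umat_eq hyB
  have hR : Near l (n + 2) ((umat y) ^ l - 1 - l • (umat y - 1)) :=
    near_mono (by omega) (near_pow_prime hynear)
  have hyl : umat y - 1 = ((l : ℤ_[l]) ^ n) • B := by rw [hyB]; abel
  have e2 : umat x - (umat y) ^ l
      = ((l : ℤ_[l]) ^ (n + 1)) • (A - B) - ((umat y) ^ l - 1 - l • (umat y - 1)) := by
    rw [hxA, hyl, smul_sub]
    have e3 : l • (((l : ℤ_[l]) ^ n) • B) = ((l : ℤ_[l]) ^ (n + 1)) • B := by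
      rw [← Nat.cast_smul_eq_nsmul ℤ_[l] l, smul_smul, ← pow_succ']
    rw [e3]
    abel
  rw [e2]
  refine near_sub ?_ hR
  have hAB : Near l 1 (A - B) := near_one_of_map_eq (by rw [hBmap])
  intro i j
  rw [Matrix.smul_apply, smul_eq_mul]
  have : (l : ℤ_[l]) ^ (n + 2) = (l : ℤ_[l]) ^ (n + 1) * (l : ℤ_[l]) ^ 1 := by
    rw [← pow_add]
  rw [this]
  exact mul_dvd_mul_left _ (hAB i j)

end Vset

section Topo

variable {l : ℕ} [Fact (Nat.Prime l)] {r : ℕ} {P : Subgroup (GL (Fin r) ℤ_[l])}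

theorem norm_le_of_near {m : ℕ} {X : Matrix (Fin r) (Fin r) ℤ_[l]} (h : Near l m X)
    (i j : Fin r) : ‖X i j‖ ≤ (l : ℝ) ^ (-(m : ℤ)) := by
  rw [PadicInt.norm_le_pow_iff_mem_span_pow, Ideal.mem_span_singleton]
  exact h i j

theorem near_of_norm_le {m : ℕ} {X : Matrix (Fin r) (Fin r) ℤ_[l]}
    (h : ∀ i j, ‖X i j‖ ≤ (l : ℝ) ^ (-(m : ℤ))) : Near l m X := fun i j => by
  have := (PadicInt.norm_le_pow_iff_mem_span_pow (X i j) m).mp (h i j)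
  rwa [Ideal.mem_span_singleton] at this

theorem continuous_umat : Continuous (fun x : ↥P => umat x) :=
  Units.continuous_val.comp continuous_subtype_val

theorem mem_level_iff_norm {n : ℕ} {x : ↥P} :
    x ∈ levelSubgroup l r P n ↔
      ∀ i j, ‖(umat x - 1) i j‖ < (l : ℝ) ^ (-(n : ℤ) + 1) := by
  rw [mem_level_iff]
  constructor
  · intro h i j
    rw [← PadicInt.norm_le_pow_iff_norm_lt_pow_add_one]
    exact norm_le_of_near h i j
  · intro h
    refine near_of_norm_le fun i j => ?_
    rw [PadicInt.norm_le_pow_iff_norm_lt_pow_add_one]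
    exact h i j

theorem isOpen_level (n : ℕ) :
    IsOpen ((levelSubgroup l r P n : Subgroup ↥P) : Set ↥P) := by
  have hset : ((levelSubgroup l r P n : Subgroup ↥P) : Set ↥P)
      = ⋂ i, ⋂ j, {x : ↥P | ‖(umat x - 1) i j‖ < (l : ℝ) ^ (-(n : ℤ) + 1)} := by
    ext x
    simp only [SetLike.mem_coe, mem_level_iff_norm, Set.mem_iInter, Set.mem_setOf_eq]
  rw [hset]
  refine isOpen_iInter_of_finite fun i => isOpen_iInter_of_finite fun j => ?_
  have hcont : Continuous fun x : ↥P => ‖(umat x - 1) i j‖ := by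
    have h1 : Continuous fun x : ↥P => umat x - 1 := continuous_umat.sub continuous_const
    have h2 : Continuous fun X : Matrix (Fin r) (Fin r) ℤ_[l] => X i j :=
      continuous_apply_apply i j
    exact (h2.comp h1).norm
  exact isOpen_lt hcont continuous_const

theorem matrix_nhds_basis {W : Set (Matrix (Fin r) (Fin r) ℤ_[l])} (hW : IsOpen W)
    (h1 : (1 : Matrix (Fin r) (Fin r) ℤ_[l]) ∈ W) :
    ∃ m : ℕ, ∀ X : Matrix (Fin r) (Fin r) ℤ_[l], Near l m (X - 1) → X ∈ W := by
  have hof : Continuous fun f : Fin r → Fin r → ℤ_[l] =>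
      (Matrix.of f : Matrix (Fin r) (Fin r) ℤ_[l]) := by
    apply continuous_matrix
    intro i j
    exact continuous_apply_apply i j
  set W' : Set (Fin r → Fin r → ℤ_[l]) := (fun f : Fin r → Fin r → ℤ_[l] =>
      (Matrix.of f : Matrix (Fin r) (Fin r) ℤ_[l])) ⁻¹' W with hW'
  have hW'open : IsOpen W' := hW.preimage hof
  have hmem : (fun i j => (1 : Matrix (Fin r) (Fin r) ℤ_[l]) i j) ∈ W' := h1
  obtain ⟨ε, hε, hball⟩ := Metric.isOpen_iff.mp hW'open _ hmem
  have hlt1 : (l : ℝ)⁻¹ < 1 := by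
    rw [inv_lt_one_iff₀]
    right
    exact_mod_cast Nat.lt_of_lt_of_le Nat.one_lt_two (hl2 (l := l))
  obtain ⟨m, hm⟩ := exists_pow_lt_of_lt_one hε hlt1
  refine ⟨m, fun X hX => ?_⟩
  have hXW' : (fun i j => X i j) ∈ W' := by
    apply hball
    rw [Metric.mem_ball]
    have hεpos : (0 : ℝ) < ε := hε
    rw [dist_pi_lt_iff hεpos]
    intro i
    rw [dist_pi_lt_iff hεpos]
    intro j
    have hle : ‖(X - 1) i j‖ ≤ (l : ℝ) ^ (-(m : ℤ)) := norm_le_of_near hX i j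
    have heq : dist (X i j) ((1 : Matrix (Fin r) (Fin r) ℤ_[l]) i j) = ‖(X - 1) i j‖ := by
      rw [dist_eq_norm, ← Matrix.sub_apply]
    rw [heq]
    calc ‖(X - 1) i j‖ ≤ (l : ℝ) ^ (-(m : ℤ)) := hle
    _ = ((l : ℝ)⁻¹) ^ m := by rw [_root_.zpow_neg, inv_pow, zpow_natCast]
    _ < ε := hm
  exact hXW'

theorem exists_level_subset {U : Set ↥P} (hU : IsOpen U) (h1 : (1 : ↥P) ∈ U) :
    ∃ m : ℕ, ∀ x : ↥P, x ∈ levelSubgroup l r P m → x ∈ U := by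
  obtain ⟨V, hVopen, hVU⟩ := isOpen_induced_iff.mp hU
  have h1V : ((1 : ↥P) : GL (Fin r) ℤ_[l]) ∈ V := by
    rw [← hVU] at h1; exact h1
  obtain ⟨W, hWopen, hWV⟩ := Units.isInducing_embedProduct.isOpen_iff.mp hVopen
  have h1W : Units.embedProduct _ (1 : GL (Fin r) ℤ_[l]) ∈ W := by
    rw [← hWV] at h1V; exact h1V
  obtain ⟨W₁, W₂, hW₁, hW₂, h1W₁, h1W₂, hprod⟩ := isOpen_prod_iff.mp hWopen _ _ h1W
  have hW₂' : IsOpen (MulOpposite.op ⁻¹' W₂ : Set (Matrix (Fin r) (Fin r) ℤ_[l])) :=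
    hW₂.preimage MulOpposite.continuous_op
  have h1W₂' : (1 : Matrix (Fin r) (Fin r) ℤ_[l]) ∈ MulOpposite.op ⁻¹' W₂ := h1W₂
  obtain ⟨m₁, hm₁⟩ := matrix_nhds_basis hW₁ h1W₁
  obtain ⟨m₂, hm₂⟩ := matrix_nhds_basis hW₂' h1W₂'
  refine ⟨max m₁ m₂, fun x hx => ?_⟩
  have hxv : umat x ∈ W₁ := by
    apply hm₁
    exact near_mono (le_max_left _ _) (mem_level_iff.mp hx)
  have hxinv : x⁻¹ ∈ levelSubgroup l r P (max m₁ m₂) := inv_mem hx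
  have hxi : umat x⁻¹ ∈ MulOpposite.op ⁻¹' W₂ := by
    apply hm₂
    exact near_mono (le_max_right _ _) (mem_level_iff.mp hxinv)
  have hep : Units.embedProduct _ ((x : GL (Fin r) ℤ_[l])) ∈ W₁ ×ˢ W₂ := by
    constructor
    · exact hxv
    · exact hxi
  have hxV : ((x : ↥P) : GL (Fin r) ℤ_[l]) ∈ V := by
    rw [← hWV]
    exact hprod hep
  rw [← hVU]
  exact hxV

end Topo

section GrpAux

variable {l : ℕ} [Fact (Nat.Prime l)] {r : ℕ} {P : Subgroup (GL (Fin r) ℤ_[l])}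

theorem level_finiteIndex (n : ℕ) : (levelSubgroup l r P n).FiniteIndex := by
  haveI : NeZero (l ^ n) := ⟨pow_ne_zero _ (Fact.out : Nat.Prime l).ne_zero⟩
  haveI : Finite (GL (Fin r) (ZMod (l ^ n))) := inferInstance
  exact Subgroup.finiteIndex_ker ((glRed l r n).comp P.subtype)

theorem isOpen_level_subgroupOf (m : ℕ) (H : Subgroup ↥P) :
    IsOpen (((levelSubgroup l r P m).subgroupOf H : Subgroup ↥H) : Set ↥H) := by
  have hset : (((levelSubgroup l r P m).subgroupOf H : Subgroup ↥H) : Set ↥H)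
      = Subtype.val ⁻¹' ((levelSubgroup l r P m : Subgroup ↥P) : Set ↥P) := by
    ext a
    simp only [SetLike.mem_coe, Subgroup.mem_subgroupOf, Set.mem_preimage]
  rw [hset]
  exact (isOpen_level m).preimage continuous_subtype_val

theorem pow_l_pow_mem_level {n : ℕ} (hn : 1 ≤ n) {x : ↥P}
    (hx : x ∈ levelSubgroup l r P n) (k : ℕ) : x ^ (l ^ k) ∈ levelSubgroup l r P (n + k) := by
  induction k with
  | zero => simpa using hx
  | succ k ih =>
      have : x ^ (l ^ (k + 1)) = (x ^ (l ^ k)) ^ l := by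
        rw [← pow_mul, pow_succ]
      rw [this]
      exact pow_mem_level (le_trans hn (Nat.le_add_right n k)) ih

theorem finite_subgroups_above {G : Type*} [Group G] (K : Subgroup G) [K.FiniteIndex] :
    {W : Subgroup G | K ≤ W}.Finite := by
  haveI : Finite (G ⧸ K) := Subgroup.finite_quotient_of_finiteIndex
  have hinj : Set.InjOn (fun W : Subgroup G => (QuotientGroup.mk '' (W : Set G) : Set (G ⧸ K)))
      {W : Subgroup G | K ≤ W} := by
    intro W₁ h₁ W₂ h₂ heq
    have key : ∀ (A B : Subgroup G), K ≤ B →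
        (QuotientGroup.mk '' (A : Set G) : Set (G ⧸ K)) = QuotientGroup.mk '' (B : Set G) →
        A ≤ B := by
      intro A B hKB hAB a ha
      have : (QuotientGroup.mk a : G ⧸ K) ∈ QuotientGroup.mk '' (B : Set G) := by
        rw [← hAB]; exact ⟨a, ha, rfl⟩
      obtain ⟨b, hb, hba⟩ := this
      have : b⁻¹ * a ∈ K := QuotientGroup.eq.mp hba
      have : a = b * (b⁻¹ * a) := by group
      rw [this]
      exact B.mul_mem hb (hKB ‹b⁻¹ * a ∈ K›)
    exact le_antisymm (key W₁ W₂ h₂ heq) (key W₂ W₁ h₁ heq.symm)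
  exact Set.Finite.of_finite_image (Set.toFinite _) hinj

theorem pow_prime_eq_one_of_all_trivial {p : ℕ} (hp : Nat.Prime p) {G : Type*} [Group G]
    (hG : IsPGroup p G) (hsub : ∀ S : Subgroup G, S = ⊥ ∨ S = ⊤) (g : G) : g ^ p = 1 := by
  rcases hsub (Subgroup.zpowers (g ^ p)) with hb | ht
  · exact Subgroup.zpowers_eq_bot.mp hb
  · by_cases hg : g = 1
    · rw [hg, one_pow]
    · exfalso
      have hmem : g ∈ Subgroup.zpowers (g ^ p) := ht ▸ Subgroup.mem_top g
      obtain ⟨t, hgt⟩ := Subgroup.mem_zpowers_iff.mp hmem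
      have h1 : g ^ ((p : ℤ) * t - 1) = 1 := by
        rw [_root_.zpow_sub, _root_.zpow_mul, zpow_natCast, zpow_one, hgt, mul_inv_cancel]
      obtain ⟨k, hk⟩ := hG g
      have hord : orderOf g ∣ p ^ k := orderOf_dvd_of_pow_eq_one hk
      obtain ⟨j, hj, hjord⟩ := (Nat.dvd_prime_pow hp).mp hord
      have hdvd : ((orderOf g : ℤ)) ∣ ((p : ℤ) * t - 1) := orderOf_dvd_iff_zpow_eq_one.mpr h1
      rcases Nat.eq_zero_or_pos j with hj0 | hjpos
      · rw [hj0, pow_zero] at hjord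
        exact hg (orderOf_eq_one_iff.mp hjord)
      · have hpd : (p : ℤ) ∣ ((p : ℤ) * t - 1) := by
          refine dvd_trans ?_ hdvd
          rw [hjord]
          exact_mod_cast dvd_pow_self (p : ℤ) hjpos.ne'
        have : (p : ℤ) ∣ 1 := by
          have h2 : (p : ℤ) ∣ (p : ℤ) * t := Dvd.intro t rfl
          have := dvd_sub h2 hpd
          simpa using this
        have := Int.le_of_dvd one_pos this
        have hp2 : 2 ≤ p := hp.two_le
        omega

theorem coatom_normal_of_pgroup {p : ℕ} [Fact (Nat.Prime p)] {G : Type*} [Group G] [Finite G]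
    (hG : IsPGroup p G) {M : Subgroup G} (hM : IsCoatom M) : M.Normal := by
  haveI : Group.IsNilpotent G := hG.isNilpotent
  exact Subgroup.NormalizerCondition.normal_of_coatom M normalizerCondition_of_isNilpotent hM

end GrpAux

section PartG

variable {l : ℕ} [Fact (Nat.Prime l)] {r : ℕ} {P : Subgroup (GL (Fin r) ℤ_[l])}

theorem frattiniOf_le_level {n : ℕ} (hn : 2 ≤ n) :
    frattiniOf (levelSubgroup l r P n) ≤ levelSubgroup l r P (n + 1) := by
  intro x hx
  rw [frattiniOf, Subgroup.mem_map] at hx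
  obtain ⟨ξ, hξfrat, rfl⟩ := hx
  by_contra hc
  have hcK : ξ ∉ (levelSubgroup l r P (n + 1)).subgroupOf (levelSubgroup l r P n) := by
    intro hmem
    exact hc (Subgroup.mem_subgroupOf.mp hmem)
  set K₀ := (levelSubgroup l r P (n + 1)).subgroupOf (levelSubgroup l r P n) with hK₀
  haveI : (levelSubgroup l r P (n + 1)).FiniteIndex := level_finiteIndex (n + 1)
  haveI : K₀.FiniteIndex := inferInstance
  have hfam : ({W : Subgroup ↥(levelSubgroup l r P n) | K₀ ≤ W ∧ ξ ∉ W}).Finite :=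
    Set.Finite.subset (finite_subgroups_above K₀) (fun W hW => hW.1)
  obtain ⟨W, hWmem, hWmax⟩ :=
    Set.Finite.exists_maximalFor id _ hfam ⟨K₀, le_rfl, hcK⟩
  obtain ⟨hK₀W, hξW⟩ := hWmem
  have hcommK : ∀ a b : ↥(levelSubgroup l r P n), a⁻¹ * b⁻¹ * a * b ∈ K₀ := by
    intro a b
    rw [hK₀, Subgroup.mem_subgroupOf]
    have ha : (a : ↥P) ∈ levelSubgroup l r P n := a.2
    have hb : (b : ↥P) ∈ levelSubgroup l r P n := b.2
    have hco : ((a⁻¹ * b⁻¹ * a * b : ↥(levelSubgroup l r P n)) : ↥P)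
        = (a : ↥P)⁻¹ * (b : ↥P)⁻¹ * a * b := rfl
    rw [hco]
    exact commutator_mem_level (by omega) ha hb
  have hpowK : ∀ a : ↥(levelSubgroup l r P n), a ^ l ∈ K₀ := by
    intro a
    rw [hK₀, Subgroup.mem_subgroupOf]
    have hco : ((a ^ l : ↥(levelSubgroup l r P n)) : ↥P) = (a : ↥P) ^ l := rfl
    rw [hco]
    exact pow_mem_level (by omega) a.2
  haveI hWnorm : W.Normal := by
    constructor
    intro w hw g
    have h2 : w⁻¹ * (g⁻¹)⁻¹ * w * g⁻¹ ∈ K₀ := hcommK w g⁻¹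
    rw [inv_inv] at h2
    have h3 : w * (w⁻¹ * g * w * g⁻¹) = g * w * g⁻¹ := by
      rw [← mul_assoc, ← mul_assoc, ← mul_assoc, mul_inv_cancel, one_mul]
    rw [← h3]
    exact W.mul_mem hw (hK₀W h2)
  set π := QuotientGroup.mk' W with hπ
  have hexp : ∀ q : ↥(levelSubgroup l r P n) ⧸ W, q ^ l = 1 := by
    intro q
    refine QuotientGroup.induction_on q fun a => ?_
    have h5 : π (a ^ l) = 1 := (QuotientGroup.eq_one_iff _).mpr (hK₀W (hpowK a))
    rw [hπ] at h5
    simpa only [map_pow, QuotientGroup.mk'_apply] using h5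
  have hwins : ∀ v : ↥(levelSubgroup l r P n), v ∉ W → ξ ∈ W ⊔ Subgroup.zpowers v := by
    intro v hv
    by_contra hξ'
    have hWmem' : W ⊔ Subgroup.zpowers v
        ∈ {W' : Subgroup ↥(levelSubgroup l r P n) | K₀ ≤ W' ∧ ξ ∉ W'} :=
      ⟨le_trans hK₀W le_sup_left, hξ'⟩
    have heq := le_antisymm le_sup_left (hWmax hWmem' le_sup_left)
    apply hv
    have hvm : v ∈ W ⊔ Subgroup.zpowers v := Subgroup.mem_sup_right (Subgroup.mem_zpowers v)
    rw [show W = W ⊔ Subgroup.zpowers v from heq]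
    exact hvm
  have hπξ : π ξ ≠ 1 := fun h => hξW ((QuotientGroup.eq_one_iff ξ).mp h)
  have hzin : ∀ v : ↥(levelSubgroup l r P n), v ∉ W → π ξ ∈ Subgroup.zpowers (π v) := by
    intro v hv
    have hmem := hwins v hv
    have hmm : π ξ ∈ (W ⊔ Subgroup.zpowers v).map π := Subgroup.mem_map.mpr ⟨ξ, hmem, rfl⟩
    rw [Subgroup.map_sup, MonoidHom.map_zpowers] at hmm
    have hmapW : W.map π = ⊥ := by
      rw [eq_bot_iff]
      rintro q hq
      obtain ⟨w, hw, rfl⟩ := Subgroup.mem_map.mp hq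
      simp only [Subgroup.mem_bot]
      exact (QuotientGroup.eq_one_iff w).mpr hw
    rw [hmapW, bot_sup_eq] at hmm
    exact hmm
  have hVtop : ∀ V : Subgroup ↥(levelSubgroup l r P n), W < V → V = ⊤ := by
    intro V hWV
    obtain ⟨v, hvV, hvW⟩ := SetLike.exists_of_lt hWV
    have hξV : ξ ∈ V := by
      have hm := hwins v hvW
      have hsub : W ⊔ Subgroup.zpowers v ≤ V :=
        sup_le (le_of_lt hWV) (Subgroup.zpowers_le.mpr hvV)
      exact hsub hm
    rw [eq_top_iff]
    intro g _
    by_cases hgW : g ∈ W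
    · exact hWV.le hgW
    · obtain ⟨t, ht⟩ := Subgroup.mem_zpowers_iff.mp (hzin g hgW)
      have hndvd : ¬ ((l : ℤ) ∣ t) := by
        rintro ⟨s, hs⟩
        apply hπξ
        rw [← ht, hs, mul_comm, _root_.zpow_mul, zpow_natCast]
        exact hexp _
      have hco : IsCoprime ((l : ℕ) : ℤ) t :=
        ((Nat.prime_iff_prime_int.mp (Fact.out : Nat.Prime l)).irreducible.coprime_iff_not_dvd).mpr
          hndvd
      obtain ⟨a, b, hab⟩ := hco
      have hpg : π g = (π ξ) ^ b := by
        have h1 : π g = (π g) ^ (a * ((l : ℕ) : ℤ) + b * t) := by rw [hab, zpow_one]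
        rw [h1, _root_.zpow_add, mul_comm a ((l : ℕ) : ℤ), _root_.zpow_mul, zpow_natCast,
          hexp (π g), _root_.one_zpow, one_mul, mul_comm b t, _root_.zpow_mul, ht]
      have hmapV : π g ∈ V.map π := by
        rw [hpg]
        exact Subgroup.zpow_mem _ (Subgroup.mem_map.mpr ⟨ξ, hξV, rfl⟩) b
      obtain ⟨v', hv'V, hv'⟩ := Subgroup.mem_map.mp hmapV
      obtain ⟨z, hzW, hz⟩ := (QuotientGroup.mk'_eq_mk' (N := W)).mp hv'
      rw [← hz]
      exact V.mul_mem hv'V (hWV.le hzW)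
  have hWopen : IsOpen (W : Set ↥(levelSubgroup l r P n)) :=
    Subgroup.isOpen_mono hK₀W (isOpen_level_subgroupOf (n + 1) _)
  have hWne : W ≠ ⊤ := by
    intro h
    rw [h] at hξW
    exact hξW (Subgroup.mem_top ξ)
  have hWmaxopen : IsMaximalOpenSubgroup W :=
    ⟨hWopen, hWne, fun V _ hWV => hVtop V hWV⟩
  exact hξW (Subgroup.mem_sInf.mp hξfrat W hWmaxopen)

end PartG

section PartH

variable {l : ℕ} [Fact (Nat.Prime l)] {r : ℕ} {P : Subgroup (GL (Fin r) ℤ_[l])}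

theorem level_le_frattiniOf {N₁ : ℕ} (hN₁ : 2 ≤ N₁)
    (hstab : ∀ m, N₁ ≤ m → Vset l r P m = Vset l r P N₁)
    {n : ℕ} (hn : N₁ ≤ n) :
    levelSubgroup l r P (n + 1) ≤ frattiniOf (levelSubgroup l r P n) := by
  intro x hx
  have hxn : x ∈ levelSubgroup l r P n := level_antitone (Nat.le_succ n) hx
  rw [frattiniOf, Subgroup.mem_map]
  refine ⟨⟨x, hxn⟩, ?_, rfl⟩
  rw [frattiniOpen, Subgroup.mem_sInf]
  intro M hM
  obtain ⟨hMopen, hMne, hMmax⟩ := hM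
  obtain ⟨V, hVopen, hVM⟩ := isOpen_induced_iff.mp hMopen
  have h1V : (1 : ↥P) ∈ V := by
    have h1M : (1 : ↥(levelSubgroup l r P n)) ∈ Subtype.val ⁻¹' V := by
      rw [hVM]
      exact M.one_mem
    exact h1M
  obtain ⟨m, hm⟩ := exists_level_subset hVopen h1V
  set m' := max m (n + 2) with hm'
  set K := (levelSubgroup l r P m').subgroupOf (levelSubgroup l r P n) with hK
  have hKM : K ≤ M := by
    intro a ha
    rw [hK, Subgroup.mem_subgroupOf] at ha
    have haV : (a : ↥P) ∈ V := hm _ (level_antitone (le_max_left m (n + 2)) ha)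
    have haV' : a ∈ Subtype.val ⁻¹' V := haV
    rw [hVM] at haV'
    exact haV'
  haveI : (levelSubgroup l r P m').Normal := MonoidHom.normal_ker _
  haveI : (levelSubgroup l r P m').FiniteIndex := level_finiteIndex m'
  haveI hKnormal : K.Normal := by rw [hK]; infer_instance
  haveI : K.FiniteIndex := by rw [hK]; infer_instance
  haveI : Finite (↥(levelSubgroup l r P n) ⧸ K) := Subgroup.finite_quotient_of_finiteIndex
  set π := QuotientGroup.mk' K with hπ
  have hpgroup : IsPGroup l (↥(levelSubgroup l r P n) ⧸ K) := by
    intro q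
    refine QuotientGroup.induction_on q fun a => ?_
    refine ⟨m', ?_⟩
    have hp1 : (a : ↥P) ^ (l ^ m') ∈ levelSubgroup l r P (n + m') :=
      pow_l_pow_mem_level (by omega) a.2 m'
    have h2 : (a ^ (l ^ m') : ↥(levelSubgroup l r P n)) ∈ K := by
      rw [hK, Subgroup.mem_subgroupOf]
      exact level_antitone (by omega : m' ≤ n + m') hp1
    have h5 : π (a ^ (l ^ m')) = 1 := (QuotientGroup.eq_one_iff _).mpr h2
    rw [hπ] at h5
    simpa only [map_pow, QuotientGroup.mk'_apply] using h5
  have hsurj : Function.Surjective π := QuotientGroup.mk'_surjective K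
  have hc1 : Subgroup.comap π (Subgroup.map π M) = M := by
    rw [hπ, Subgroup.comap_map_eq, QuotientGroup.ker_mk']
    exact sup_of_le_left hKM
  have hMbar_ne : Subgroup.map π M ≠ ⊤ := by
    intro htop
    rw [htop, Subgroup.comap_top] at hc1
    exact hMne hc1.symm
  have hcoatom : IsCoatom (Subgroup.map π M) := by
    refine ⟨hMbar_ne, fun S hS => ?_⟩
    have hMS : M < Subgroup.comap π S := by
      refine lt_of_le_of_ne ?_ ?_
      · intro a ha
        rw [Subgroup.mem_comap]
        exact hS.le (Subgroup.mem_map.mpr ⟨a, ha, rfl⟩)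
      · intro heq
        have : Subgroup.map π M = S := by
          rw [heq, Subgroup.map_comap_eq_self_of_surjective hsurj]
        exact (ne_of_lt hS) this
    have hKS : K ≤ Subgroup.comap π S := by
      intro k hk
      rw [Subgroup.mem_comap]
      have : π k = 1 := (QuotientGroup.eq_one_iff _).mpr hk
      rw [this]
      exact S.one_mem
    have hSopen : IsOpen ((Subgroup.comap π S : Subgroup ↥(levelSubgroup l r P n)) :
        Set ↥(levelSubgroup l r P n)) := by
      refine Subgroup.isOpen_mono hKS ?_
      rw [hK]
      exact isOpen_level_subgroupOf m' _
    have htop := hMmax _ hSopen hMS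
    rw [← Subgroup.map_comap_eq_self_of_surjective hsurj S, htop]
    exact Subgroup.map_top_of_surjective π hsurj
  haveI hMbar_norm : (Subgroup.map π M).Normal := coatom_normal_of_pgroup hpgroup hcoatom
  have hsubQ : ∀ S : Subgroup ((↥(levelSubgroup l r P n) ⧸ K) ⧸ Subgroup.map π M),
      S = ⊥ ∨ S = ⊤ := by
    intro S
    set ρ := QuotientGroup.mk' (Subgroup.map π M) with hρ
    have hρsurj : Function.Surjective ρ := QuotientGroup.mk'_surjective _
    have hcomap : Subgroup.map π M ≤ Subgroup.comap ρ S := by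
      intro a ha
      rw [Subgroup.mem_comap]
      have : ρ a = 1 := (QuotientGroup.eq_one_iff _).mpr ha
      rw [this]
      exact S.one_mem
    rcases eq_or_lt_of_le hcomap with heq | hlt
    · left
      rw [← Subgroup.map_comap_eq_self_of_surjective hρsurj S, ← heq]
      rw [eq_bot_iff]
      intro q hq
      obtain ⟨w, hw, rfl⟩ := Subgroup.mem_map.mp hq
      simp only [Subgroup.mem_bot]
      exact (QuotientGroup.eq_one_iff w).mpr hw
    · right
      have htop := hcoatom.2 _ hlt
      rw [← Subgroup.map_comap_eq_self_of_surjective hρsurj S, htop]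
      exact Subgroup.map_top_of_surjective ρ hρsurj
  have hQpgroup : IsPGroup l ((↥(levelSubgroup l r P n) ⧸ K) ⧸ Subgroup.map π M) :=
    hpgroup.to_quotient (Subgroup.map π M)
  have hexpQ : ∀ q : (↥(levelSubgroup l r P n) ⧸ K) ⧸ Subgroup.map π M, q ^ l = 1 :=
    fun q => pow_prime_eq_one_of_all_trivial (Fact.out : Nat.Prime l) hQpgroup hsubQ q
  set ψ := (QuotientGroup.mk' (Subgroup.map π M)).comp π with hψ
  have hψ_one : ∀ z : ↥(levelSubgroup l r P n), z ∈ M → ψ z = 1 := by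
    intro z hz
    rw [hψ, MonoidHom.comp_apply]
    exact (QuotientGroup.eq_one_iff _).mpr (Subgroup.mem_map.mpr ⟨z, hz, rfl⟩)
  have main : ∀ t s : ℕ, m' ≤ n + s + 1 + t →
      ∀ z : ↥(levelSubgroup l r P n), (z : ↥P) ∈ levelSubgroup l r P (n + s + 1) →
      ψ z = 1 := by
    intro t
    induction t with
    | zero =>
        intro s hst z hz
        apply hψ_one
        apply hKM
        rw [hK, Subgroup.mem_subgroupOf]
        exact level_antitone (by omega) hz
    | succ t ih =>
        intro s hst z hz
        obtain ⟨y, hy, hroot⟩ := root_step hN₁ hstab (show N₁ ≤ n + s by omega) hz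
        set yy : ↥(levelSubgroup l r P n) :=
          ⟨y, level_antitone (Nat.le_add_right n s) hy⟩ with hyyv
        set zz : ↥(levelSubgroup l r P n) :=
          ⟨(y ^ l)⁻¹ * (z : ↥P), level_antitone (by omega) hroot⟩ with hzzv
        have hdec : z = yy ^ l * zz := by
          apply Subtype.ext
          show (z : ↥P) = (y : ↥P) ^ l * ((y ^ l)⁻¹ * (z : ↥P))
          rw [← mul_assoc, mul_inv_cancel, one_mul]
        have hz' : ψ zz = 1 := ih (s + 1) (by omega) zz hroot
        rw [hdec, _root_.map_mul, map_pow, hz', mul_one]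
        exact hexpQ (ψ yy)
  have hfinal : ψ ⟨x, hxn⟩ = 1 := by
    refine main m' 0 (by omega) ⟨x, hxn⟩ ?_
    exact hx
  have hπx : π ⟨x, hxn⟩ ∈ Subgroup.map π M := by
    rw [hψ, MonoidHom.comp_apply] at hfinal
    exact (QuotientGroup.eq_one_iff _).mp hfinal
  have hfin2 : (⟨x, hxn⟩ : ↥(levelSubgroup l r P n)) ∈ Subgroup.comap π (Subgroup.map π M) :=
    hπx
  rw [hc1] at hfin2
  exact hfin2

end PartH

end CnAux
/-- For `n` large enough (depending only on `Π`), `𝒞_n(Π)` coincides with the set of open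
subgroups `U ⊆ Π` such that `Π(n) ⊆ U` but `Π(n-1) ⊄ U`. -/
theorem Cn_eventually_eq (l : ℕ) [Fact (Nat.Prime l)] (r : ℕ)
    (P : Subgroup (GL (Fin r) ℤ_[l])) (hP : IsClosed (P : Set (GL (Fin r) ℤ_[l]))) :
    ∃ N : ℕ, 1 ≤ N ∧ ∀ n : ℕ, N ≤ n →
      Cn l r P n = {U : Subgroup ↥P | IsOpen (U : Set ↥P) ∧ levelSubgroup l r P n ≤ U ∧
        ¬ levelSubgroup l r P (n - 1) ≤ U} := by
  obtain ⟨N₁, hN₁2, hstab⟩ := CnAux.exists_stab (l := l) (r := r) (P := P)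
  refine ⟨N₁ + 1, by omega, fun n hn => ?_⟩
  have hn1 : n - 1 + 1 = n := by omega
  have heq : frattiniOf (levelSubgroup l r P (n - 1)) = levelSubgroup l r P n := by
    apply le_antisymm
    · have h := CnAux.frattiniOf_le_level (l := l) (r := r) (P := P) (n := n - 1) (by omega)
      rwa [hn1] at h
    · have h := CnAux.level_le_frattiniOf hN₁2 hstab (n := n - 1) (by omega)
      rwa [hn1] at h
  unfold Cn
  rw [heq]
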